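/- arXiv:2402.18316 — 2 statements merged into one kernel-verified Lean document; each statement's English description precedes it below -/
import Mathlib

section
/- Let κ < 1/2 and c ≥ √2. If u ∈ C²(ℝ;ℂ) satisfies u' ∈ L²(ℝ), 1−|u|² ∈ L²(ℝ), and the traveling-wave equation TW(c,κ) on ℝ, then u is trivial: there exists φ ∈ ℝ such that u(x) = e^{iφ} for all x ∈ ℝ. -/
open MeasureTheory Real Filter Set

noncomputable section

/-- The traveling-wave equation TW(c,κ):
`-i c u' + u'' + u (1 - |u|²) - κ u (|u|²)'' = 0` on `ℝ`. -/
def TW (c κ : ℝ) (u : ℝ → ℂ) : Prop :=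
  ∀ x : ℝ,
    -Complex.I * (c : ℂ) * deriv u x + deriv (deriv u) x
      + u x * (1 - ((‖u x‖ ^ 2 : ℝ) : ℂ))
      - (κ : ℂ) * u x * deriv (deriv fun y : ℝ => ((‖u y‖ ^ 2 : ℝ) : ℂ)) x = 0

/-- Membership in the energy space `𝒳(ℝ)`:
`u' ∈ L²(ℝ)` and `1 - |u|² ∈ L²(ℝ)`. -/
def inX (u : ℝ → ℂ) : Prop :=
  MemLp (deriv u) 2 (volume : Measure ℝ) ∧
  MemLp (fun x : ℝ => 1 - ‖u x‖ ^ 2) 2 (volume : Measure ℝ)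

/-- A positive function bounded below on an infinite-measure set is not integrable. -/
lemma aux_not_integrable {f : ℝ → ℝ} {δ : ℝ} {S : Set ℝ} (hS : MeasurableSet S)
    (hvol : volume S = ⊤) (hf : Integrable f (volume : Measure ℝ)) (hδ : 0 < δ)
    (hge : ∀ x ∈ S, δ ≤ f x) : False := by
  have h1 : IntegrableOn f S volume := hf.integrableOn
  have h2 : IntegrableOn (fun _ : ℝ => δ) S volume := by
    apply Integrable.mono' h1 aestronglyMeasurable_const
    filter_upwards [ae_restrict_mem hS] with x hx
    rw [Real.norm_eq_abs, abs_of_pos hδ]; exact hge x hx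
  rw [IntegrableOn, integrable_const_iff] at h2
  rcases h2 with h | h
  · exact hδ.ne' h
  · have h := h.measure_univ_lt_top
    rw [Measure.restrict_apply_univ, hvol] at h
    exact (lt_irrefl _ h)

/-- A nonneg integrable function gets arbitrarily close to 0 along some sequence. -/
lemma aux_seq {f : ℝ → ℝ} (hf : Integrable f (volume : Measure ℝ)) (h0 : ∀ x, 0 ≤ f x) :
    ∃ a : ℕ → ℝ, Tendsto (fun n => f (a n)) atTop (nhds 0) := by
  have H : ∀ n : ℕ, ∃ p : ℝ, f p < 1 / (n + 1) := by
    intro n; by_contra hcon; push_neg at hcon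
    exact aux_not_integrable MeasurableSet.univ (by simp) hf (by positivity)
      (fun x _ => hcon x)
  choose a ha using H
  exact ⟨a, squeeze_zero (fun n => h0 (a n)) (fun n => (ha n).le)
    tendsto_one_div_add_atTop_nhds_zero_nat⟩

lemma aux_sq_tendsto {g : ℕ → ℝ} (h : Tendsto (fun n => (g n) ^ 2) atTop (nhds 0)) :
    Tendsto g atTop (nhds 0) := by
  have h1 : Tendsto (fun n => |g n|) atTop (nhds 0) := by
    have h2 := (Real.continuous_sqrt.tendsto 0).comp h
    simpa [Function.comp_def, Real.sqrt_sq_eq_abs] using h2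
  have h3 : Tendsto (fun n => -|g n|) atTop (nhds 0) := by
    simpa using h1.neg
  exact tendsto_of_tendsto_of_tendsto_of_le_of_le h3 h1
    (fun n => neg_abs_le _) (fun n => le_abs_self _)

/-- Endgame for `c² > 2`: a continuous function with square-integrable values that
vanishes whenever it is small, vanishes identically. -/
lemma aux_clopen {η : ℝ → ℝ} (hcont : Continuous η)
    (hL2 : Integrable (fun x => η x ^ 2) (volume : Measure ℝ)) {ε : ℝ} (hε : 0 < ε)
    (key : ∀ x, |η x| ≤ ε → η x = 0) : ∀ x, η x = 0 := by
  have hSeq : {x : ℝ | |η x| < ε} = {x : ℝ | η x = 0} := by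
    ext x
    constructor
    · intro hx; exact key x (le_of_lt hx)
    · intro hx; simp only [mem_setOf_eq] at hx ⊢; rw [hx]; simpa using hε
  have hopen : IsOpen {x : ℝ | |η x| < ε} :=
    isOpen_lt (continuous_abs.comp hcont) continuous_const
  have hclosed : IsClosed {x : ℝ | |η x| < ε} := by
    rw [hSeq]
    exact isClosed_eq hcont continuous_const
  have hne : {x : ℝ | |η x| < ε}.Nonempty := by
    rw [nonempty_iff_ne_empty]
    intro hcon
    apply aux_not_integrable MeasurableSet.univ (by simp) hL2 (mul_pos hε hε)
    intro x _
    have hx : ε ≤ |η x| := by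
      by_contra h
      push_neg at h
      have : x ∈ {x : ℝ | |η x| < ε} := h
      rw [hcon] at this
      exact this
    calc ε * ε ≤ |η x| * |η x| := mul_le_mul hx hx hε.le (abs_nonneg _)
      _ = η x ^ 2 := by rw [← abs_mul, ← sq, abs_sq]
  intro x
  have huniv : {x : ℝ | |η x| < ε} = univ :=
    (isClopen_iff.mp ⟨hclosed, hopen⟩).resolve_left (Nonempty.ne_empty hne)
  exact key x (le_of_lt (huniv ▸ mem_univ x : x ∈ {x : ℝ | |η x| < ε}))

/-- Endgame for `c² = 2`: if `h` is `C¹`, `h²` integrable, and `h'` never vanishes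
where `h > 0`, then `h ≤ 0` everywhere. -/
lemma aux_bump {h d : ℝ → ℝ} (hcont : Continuous h)
    (hd : ∀ x, HasDerivAt h (d x) x)
    (hL2 : Integrable (fun x => h x ^ 2) (volume : Measure ℝ))
    (hpos : ∀ x, 0 < h x → d x ≠ 0) : ∀ x, h x ≤ 0 := by
  intro x₀
  by_contra hcon
  push_neg at hcon
  have hd0 := hpos x₀ hcon
  rcases lt_or_gt_of_ne hd0 with hneg | hposd
  · -- d x₀ < 0 : then h ≥ h x₀ on Iic x₀
    have claim : ∀ a, a ≤ x₀ → h x₀ ≤ h a := by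
      intro a ha
      rcases eq_or_lt_of_le ha with rfl | ha'
      · exact le_refl _
      by_contra hcb
      push_neg at hcb
      obtain ⟨ξ, hξmem, hξmax⟩ := isCompact_Icc.exists_isMaxOn (nonempty_Icc.mpr ha)
        hcont.continuousOn
      have hξx₀ : h x₀ ≤ h ξ := hξmax (show x₀ ∈ Icc a x₀ from ⟨ha, le_refl _⟩)
      have hξpos : 0 < h ξ := lt_of_lt_of_le hcon hξx₀
      have hξne : ξ ≠ a := by
        intro he
        rw [he] at hξx₀
        exact absurd hξx₀ (not_le.mpr hcb)
      rcases eq_or_lt_of_le hξmem.2 with he | hlt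
      · -- ξ = x₀ : left-sided slope contradiction
        have hslope := hasDerivAt_iff_tendsto_slope.mp (hd x₀)
        have hgt : ∀ᶠ y in nhdsWithin x₀ (Iio x₀), slope h x₀ y < 0 := by
          have h1 : {z : ℝ | z < 0} ∈ nhds (d x₀) := Iio_mem_nhds hneg
          have h2 := hslope h1
          exact nhdsWithin_mono x₀ (fun y (hy : y ∈ Iio x₀) =>
            (ne_of_lt hy : y ≠ x₀)) h2
        have hmem : Ioo a x₀ ∈ nhdsWithin x₀ (Iio x₀) :=
          Ioo_mem_nhdsLT_of_mem ⟨ha', le_refl _⟩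
        obtain ⟨y, hy1, hy2⟩ := (hgt.and (eventually_of_mem hmem (fun y hy => hy))).exists
        have hyx : y ≠ x₀ := ne_of_lt hy2.2
        have h6 : h y - h x₀ = slope h x₀ y * (y - x₀) := by
          rw [slope_def_field]
          rw [div_mul_cancel₀]
          exact sub_ne_zero.mpr hyx
        have h7 : 0 < h y - h x₀ := by
          rw [h6]
          exact mul_pos_of_neg_of_neg hy1 (sub_neg.mpr hy2.2)
        have h8 : h y ≤ h ξ := hξmax (show y ∈ Icc a x₀ from ⟨hy2.1.le, hy2.2.le⟩)
        rw [he] at h8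
        linarith
      · -- interior maximum
        have hξa : a < ξ := lt_of_le_of_ne hξmem.1 (Ne.symm hξne)
        have hloc : IsLocalMax h ξ := hξmax.isLocalMax (Icc_mem_nhds hξa hlt)
        exact hpos ξ hξpos (hloc.hasDerivAt_eq_zero (hd ξ))
    exact aux_not_integrable measurableSet_Iic Real.volume_Iic hL2
      (pow_pos hcon 2) (fun x hx => by
        have := claim x hx
        calc h x₀ ^ 2 ≤ h x ^ 2 := by nlinarith
          _ ≤ h x ^ 2 := le_refl _)
  · -- d x₀ > 0 : then h ≥ h x₀ on Ici x₀
    have claim : ∀ b, x₀ ≤ b → h x₀ ≤ h b := by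
      intro b hb
      rcases eq_or_lt_of_le hb with rfl | hb'
      · exact le_refl _
      by_contra hcb
      push_neg at hcb
      obtain ⟨ξ, hξmem, hξmax⟩ := isCompact_Icc.exists_isMaxOn (nonempty_Icc.mpr hb)
        hcont.continuousOn
      have hξx₀ : h x₀ ≤ h ξ := hξmax (show x₀ ∈ Icc x₀ b from ⟨le_refl _, hb⟩)
      have hξpos : 0 < h ξ := lt_of_lt_of_le hcon hξx₀
      have hξne : ξ ≠ b := by
        intro he
        rw [he] at hξx₀
        exact absurd hξx₀ (not_le.mpr hcb)
      rcases eq_or_lt_of_le hξmem.1 with he | hlt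
      · -- ξ = x₀ : right-sided slope contradiction
        have hslope := hasDerivAt_iff_tendsto_slope.mp (hd x₀)
        have hgt : ∀ᶠ y in nhdsWithin x₀ (Ioi x₀), 0 < slope h x₀ y := by
          have h1 : {z : ℝ | 0 < z} ∈ nhds (d x₀) := Ioi_mem_nhds hposd
          have h2 := hslope h1
          exact nhdsWithin_mono x₀ (fun y (hy : y ∈ Ioi x₀) =>
            (ne_of_gt hy : y ≠ x₀)) h2
        have hmem : Ioo x₀ b ∈ nhdsWithin x₀ (Ioi x₀) :=
          Ioo_mem_nhdsGT_of_mem ⟨le_refl _, hb'⟩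
        obtain ⟨y, hy1, hy2⟩ := (hgt.and (eventually_of_mem hmem (fun y hy => hy))).exists
        have hyx : y ≠ x₀ := ne_of_gt hy2.1
        have h6 : h y - h x₀ = slope h x₀ y * (y - x₀) := by
          rw [slope_def_field]
          rw [div_mul_cancel₀]
          exact sub_ne_zero.mpr hyx
        have h7 : 0 < h y - h x₀ := by
          rw [h6]
          exact mul_pos hy1 (sub_pos.mpr hy2.1)
        have h8 : h y ≤ h ξ := hξmax (show y ∈ Icc x₀ b from ⟨hy2.1.le, hy2.2.le⟩)
        rw [← he] at h8
        linarith
      · -- interior maximum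
        have hξb : ξ < b := lt_of_le_of_ne hξmem.2 hξne
        have hloc : IsLocalMax h ξ := hξmax.isLocalMax (Icc_mem_nhds hlt hξb)
        exact hpos ξ hξpos (hloc.hasDerivAt_eq_zero (hd ξ))
    exact aux_not_integrable measurableSet_Ici Real.volume_Ici hL2
      (pow_pos hcon 2) (fun x hx => by
        have := claim x hx
        nlinarith)

set_option maxHeartbeats 1000000 in
/-- for `κ < 1/2` and `c ≥ √2`, any `C²` finite-energy solution of TW(c,κ)
is a constant of modulus one. -/
theorem stmt0 (κ c : ℝ) (hκ : κ < 1 / 2) (hc : Real.sqrt 2 ≤ c)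
    (u : ℝ → ℂ) (hreg : ContDiff ℝ 2 u) (hX : inX u) (htw : TW c κ u) :
    ∃ φ : ℝ, ∀ x : ℝ, u x = Complex.exp (Complex.I * (φ : ℂ)) := by
  -- regularity
  have h2 : (2 : WithTop ℕ∞) = 1 + 1 := by norm_num
  rw [h2, contDiff_succ_iff_deriv] at hreg
  obtain ⟨hudiff, -, h1⟩ := hreg
  rw [contDiff_one_iff_deriv] at h1
  obtain ⟨hvdiff, hv'cont⟩ := h1
  set v : ℝ → ℂ := deriv u with hv
  have hu : ∀ x, HasDerivAt u (v x) x := fun x => (hudiff x).hasDerivAt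
  have hvd : ∀ x, HasDerivAt v (deriv v x) x := fun x => (hvdiff x).hasDerivAt
  have hconj : ∀ x, HasDerivAt (fun y => (starRingEnd ℂ) (u y)) ((starRingEnd ℂ) (v x)) x := by
    intro x; simpa [Complex.star_def] using (hu x).star
  have hρd : ∀ x, HasDerivAt (fun y => Complex.normSq (u y))
      (2 * (v x * (starRingEnd ℂ) (u x)).re) x := by
    intro x
    have h := ((hu x).mul (hconj x))
    have h2 := Complex.reCLM.hasFDerivAt.comp_hasDerivAt x h
    convert h2 using 1
    · rfl
    · rfl
    · funext y
      simp [Complex.mul_conj, Complex.normSq_apply, Complex.mul_re, Complex.conj_re,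
        Complex.conj_im]
      try ring
    · simp [Complex.mul_re, Complex.conj_re, Complex.conj_im]; try ring
  have hd1d : ∀ x, HasDerivAt (fun y => 2 * (v y * (starRingEnd ℂ) (u y)).re)
      (2 * (deriv v x * (starRingEnd ℂ) (u x)).re + 2 * Complex.normSq (v x)) x := by
    intro x
    have h := ((hvd x).mul (hconj x))
    have h2 := Complex.reCLM.hasFDerivAt.comp_hasDerivAt x h
    have h3 := h2.const_mul (2:ℝ)
    convert h3 using 1
    · rfl
    · rfl
    · rfl
    simp [Complex.mul_re, Complex.conj_re, Complex.conj_im, Complex.normSq_apply]; try ring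
  have habs : (fun y : ℝ => ((‖u y‖ ^ 2 : ℝ) : ℂ))
      = fun y => ((Complex.normSq (u y) : ℝ) : ℂ) := by
    funext y; rw [Complex.sq_norm]
  have hder1 : (deriv fun y : ℝ => ((Complex.normSq (u y) : ℝ) : ℂ))
      = fun y => ((2 * (v y * (starRingEnd ℂ) (u y)).re : ℝ) : ℂ) := by
    funext y; exact ((hρd y).ofReal_comp).deriv
  have heq : ∀ x, deriv v x = Complex.I * c * v x - u x * (1 - (Complex.normSq (u x) : ℂ))
      + κ * u x * ((2 * (deriv v x * (starRingEnd ℂ) (u x)).re + 2 * Complex.normSq (v x) : ℝ) : ℂ) := by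
    intro x
    have h := htw x
    rw [habs, hder1] at h
    have h4 : deriv (fun y => ((2 * (v y * (starRingEnd ℂ) (u y)).re : ℝ) : ℂ)) x
        = ((2 * (deriv v x * (starRingEnd ℂ) (u x)).re + 2 * Complex.normSq (v x) : ℝ) : ℂ) :=
      ((hd1d x).ofReal_comp).deriv
    rw [h4] at h
    rw [Complex.sq_norm] at h
    linear_combination h
  -- F has zero derivative
  have hFd : ∀ x, HasDerivAt (fun y => ((starRingEnd ℂ) (u y) * v y).im
      + c/2 * (1 - Complex.normSq (u y))) 0 x := by
    intro x
    have hmul : HasDerivAt (fun y => (starRingEnd ℂ) (u y) * v y)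
        ((starRingEnd ℂ) (v x) * v x + (starRingEnd ℂ) (u x) * deriv v x) x :=
      (hconj x).mul (hvd x)
    have him := Complex.imCLM.hasFDerivAt.comp_hasDerivAt x hmul
    have hcm := ((hρd x).const_sub 1).const_mul (c/2)
    have h := him.add hcm
    convert h using 1
    · rfl
    · rfl
    · rfl
    rw [heq x]
    simp [Complex.add_im, Complex.mul_im, Complex.mul_re, Complex.conj_re, Complex.conj_im,
      Complex.normSq_apply, Complex.I_re, Complex.I_im, Complex.ofReal_re, Complex.ofReal_im,
      Complex.sub_re, Complex.sub_im, Complex.one_re, Complex.one_im]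
    ring
  -- E has zero derivative
  have hEd : ∀ x, HasDerivAt (fun y => Complex.normSq (v y) + Complex.normSq (u y)
      - (Complex.normSq (u y))^2/2 - κ/2 * (2 * (v y * (starRingEnd ℂ) (u y)).re)^2) 0 x := by
    intro x
    have hnv : HasDerivAt (fun y => Complex.normSq (v y))
        (2 * (deriv v x * (starRingEnd ℂ) (v x)).re) x := by
      have hconjv : HasDerivAt (fun y => (starRingEnd ℂ) (v y)) ((starRingEnd ℂ) (deriv v x)) x := by
        simpa [Complex.star_def] using (hvd x).star
      have h := ((hvd x).mul hconjv)
      have h2 := Complex.reCLM.hasFDerivAt.comp_hasDerivAt x h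
      convert h2 using 1
      · rfl
      · rfl
      · funext y
        simp [Complex.normSq_apply, Complex.mul_re, Complex.conj_re, Complex.conj_im]
        try ring
      · simp [Complex.mul_re, Complex.conj_re, Complex.conj_im]; try ring
    have hsq := ((hρd x).pow 2).div_const 2
    have hd1sq := ((hd1d x).pow 2).const_mul (κ/2)
    have h := ((hnv.add (hρd x)).sub hsq).sub hd1sq
    have hkey : 2 * (deriv v x * (starRingEnd ℂ) (v x)).re
        = (2 * (v x * (starRingEnd ℂ) (u x)).re) *
          (κ * (2 * (deriv v x * (starRingEnd ℂ) (u x)).re + 2 * Complex.normSq (v x))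
            - (1 - Complex.normSq (u x))) := by
      conv_lhs => rw [heq x]
      simp [Complex.add_im, Complex.mul_im, Complex.mul_re, Complex.conj_re, Complex.conj_im,
        Complex.normSq_apply, Complex.I_re, Complex.I_im, Complex.ofReal_re, Complex.ofReal_im,
        Complex.sub_re, Complex.sub_im, Complex.one_re, Complex.one_im]
      ring
    convert h using 1
    · rfl
    · rfl
    · rfl
    rw [hkey]
    ring
  -- constancy
  have hFc := is_const_of_deriv_eq_zero (fun x => (hFd x).differentiableAt)
    (fun x => (hFd x).deriv)
  have hEc := is_const_of_deriv_eq_zero (fun x => (hEd x).differentiableAt)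
    (fun x => (hEd x).deriv)
  -- integrability
  obtain ⟨hv2, hη2⟩ := hX
  rw [← hv] at hv2
  have hη2' : Integrable (fun x => (1 - Complex.normSq (u x))^2) (volume : Measure ℝ) := by
    have h3 := hη2.integrable_sq
    simpa [Complex.sq_norm] using h3
  have hnv2 : Integrable (fun x => Complex.normSq (v x)) (volume : Measure ℝ) := by
    have h3 := hv2.norm.integrable_sq
    have h4 : (fun x => ‖v x‖ ^ 2) = fun x => Complex.normSq (v x) := by
      funext x
      rw [Complex.sq_norm]
    rwa [h4] at h3
  have hfint : Integrable (fun x => (1 - Complex.normSq (u x))^2 + Complex.normSq (v x))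
      (volume : Measure ℝ) := hη2'.add hnv2
  have hf0 : ∀ x, 0 ≤ (1 - Complex.normSq (u x))^2 + Complex.normSq (v x) :=
    fun x => add_nonneg (sq_nonneg _) (Complex.normSq_nonneg _)
  obtain ⟨a, hfa⟩ := aux_seq hfint hf0
  -- componentwise limits
  have hsq1 : Tendsto (fun n => (1 - Complex.normSq (u (a n)))^2) atTop (nhds 0) :=
    squeeze_zero (fun n => sq_nonneg _)
      (fun n => le_add_of_nonneg_right (Complex.normSq_nonneg _)) hfa
  have hη0 : Tendsto (fun n => 1 - Complex.normSq (u (a n))) atTop (nhds 0) :=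
    aux_sq_tendsto hsq1
  have hnv0 : Tendsto (fun n => Complex.normSq (v (a n))) atTop (nhds 0) :=
    squeeze_zero (fun n => Complex.normSq_nonneg _)
      (fun n => le_add_of_nonneg_left (sq_nonneg _)) hfa
  have hρ1 : Tendsto (fun n => Complex.normSq (u (a n))) atTop (nhds 1) := by
    have h3 := (tendsto_const_nhds : Tendsto (fun _ : ℕ => (1:ℝ)) atTop (nhds 1)).sub hη0
    simpa using h3
  have hun : Tendsto (fun n => ‖u (a n)‖) atTop (nhds 1) := by
    have h3 := (Real.continuous_sqrt.tendsto 1).comp hρ1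
    simpa [Function.comp_def, Complex.norm_def] using h3
  have hvn : Tendsto (fun n => ‖v (a n)‖) atTop (nhds 0) := by
    have h3 := (Real.continuous_sqrt.tendsto 0).comp hnv0
    simpa [Function.comp_def, Complex.norm_def] using h3
  have hprod : Tendsto (fun n => ‖u (a n)‖ * ‖v (a n)‖)
      atTop (nhds 0) := by
    have h3 := hun.mul hvn
    simpa using h3
  -- identity C
  have hC : ∀ x, ((starRingEnd ℂ) (u x) * v x).im = c/2 * (Complex.normSq (u x) - 1) := by
    intro x
    have him : Tendsto (fun n => ((starRingEnd ℂ) (u (a n)) * v (a n)).im) atTop (nhds 0) := by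
      have hprodneg : Tendsto (fun n => -(‖u (a n)‖ * ‖v (a n)‖))
          atTop (nhds 0) := by simpa using hprod.neg
      apply tendsto_of_tendsto_of_tendsto_of_le_of_le hprodneg hprod
      · intro n
        have hb : |((starRingEnd ℂ) (u (a n)) * v (a n)).im|
            ≤ ‖u (a n)‖ * ‖v (a n)‖ := by
          calc |((starRingEnd ℂ) (u (a n)) * v (a n)).im|
              ≤ ‖(starRingEnd ℂ) (u (a n)) * v (a n)‖ := Complex.abs_im_le_norm _
            _ = ‖u (a n)‖ * ‖v (a n)‖ := by
                rw [norm_mul, Complex.norm_conj]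
        exact neg_le_of_neg_le (neg_le.mp (abs_le.mp hb).1)
      · intro n
        have hb : |((starRingEnd ℂ) (u (a n)) * v (a n)).im|
            ≤ ‖u (a n)‖ * ‖v (a n)‖ := by
          calc |((starRingEnd ℂ) (u (a n)) * v (a n)).im|
              ≤ ‖(starRingEnd ℂ) (u (a n)) * v (a n)‖ := Complex.abs_im_le_norm _
            _ = ‖u (a n)‖ * ‖v (a n)‖ := by
                rw [norm_mul, Complex.norm_conj]
        exact (abs_le.mp hb).2
    have hFn : Tendsto (fun n => ((starRingEnd ℂ) (u (a n)) * v (a n)).im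
        + c/2 * (1 - Complex.normSq (u (a n)))) atTop (nhds 0) := by
      have h3 := him.add ((tendsto_const_nhds :
        Tendsto (fun _ : ℕ => c/2) atTop (nhds (c/2))).mul hη0)
      simpa using h3
    have hFcs : Tendsto (fun n => ((starRingEnd ℂ) (u (a n)) * v (a n)).im
        + c/2 * (1 - Complex.normSq (u (a n)))) atTop
        (nhds (((starRingEnd ℂ) (u x) * v x).im + c/2 * (1 - Complex.normSq (u x)))) := by
      have h3 : (fun n => ((starRingEnd ℂ) (u (a n)) * v (a n)).im
          + c/2 * (1 - Complex.normSq (u (a n))))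
          = fun _ => ((starRingEnd ℂ) (u x) * v x).im + c/2 * (1 - Complex.normSq (u x)) :=
        funext fun n => hFc (a n) x
      rw [h3]
      exact tendsto_const_nhds
    have h0 := tendsto_nhds_unique hFcs hFn
    linarith
  -- identity D
  have hD : ∀ x, Complex.normSq (v x) = (1 - Complex.normSq (u x))^2/2
      + κ/2 * (2 * (v x * (starRingEnd ℂ) (u x)).re)^2 := by
    intro x
    have hd1n : Tendsto (fun n => 2 * (v (a n) * (starRingEnd ℂ) (u (a n))).re)
        atTop (nhds 0) := by
      have hb2 : Tendsto (fun n => 2 * (‖u (a n)‖ * ‖v (a n)‖))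
          atTop (nhds 0) := by
        have h3 := hprod.const_mul (2:ℝ)
        simpa using h3
      have hb2neg : Tendsto (fun n => -(2 * (‖u (a n)‖ * ‖v (a n)‖)))
          atTop (nhds 0) := by simpa using hb2.neg
      apply tendsto_of_tendsto_of_tendsto_of_le_of_le hb2neg hb2
      · intro n
        have hb : |2 * (v (a n) * (starRingEnd ℂ) (u (a n))).re|
            ≤ 2 * (‖u (a n)‖ * ‖v (a n)‖) := by
          rw [abs_mul, abs_two]
          have h5 : |(v (a n) * (starRingEnd ℂ) (u (a n))).re|
              ≤ ‖u (a n)‖ * ‖v (a n)‖ := by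
            calc |(v (a n) * (starRingEnd ℂ) (u (a n))).re|
                ≤ ‖v (a n) * (starRingEnd ℂ) (u (a n))‖ := Complex.abs_re_le_norm _
              _ = ‖u (a n)‖ * ‖v (a n)‖ := by
                  rw [norm_mul, Complex.norm_conj, mul_comm]
          linarith
        exact neg_le_of_neg_le (neg_le.mp (abs_le.mp hb).1)
      · intro n
        have hb : |2 * (v (a n) * (starRingEnd ℂ) (u (a n))).re|
            ≤ 2 * (‖u (a n)‖ * ‖v (a n)‖) := by
          rw [abs_mul, abs_two]
          have h5 : |(v (a n) * (starRingEnd ℂ) (u (a n))).re|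
              ≤ ‖u (a n)‖ * ‖v (a n)‖ := by
            calc |(v (a n) * (starRingEnd ℂ) (u (a n))).re|
                ≤ ‖v (a n) * (starRingEnd ℂ) (u (a n))‖ := Complex.abs_re_le_norm _
              _ = ‖u (a n)‖ * ‖v (a n)‖ := by
                  rw [norm_mul, Complex.norm_conj, mul_comm]
          linarith
        exact (abs_le.mp hb).2
    have hEn : Tendsto (fun n => Complex.normSq (v (a n)) + Complex.normSq (u (a n))
        - (Complex.normSq (u (a n)))^2/2
        - κ/2 * (2 * (v (a n) * (starRingEnd ℂ) (u (a n))).re)^2) atTop (nhds (1/2)) := by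
      have h3 := ((hnv0.add hρ1).sub ((hρ1.pow 2).div_const 2)).sub
        ((hd1n.pow 2).const_mul (κ/2))
      norm_num at h3
      convert h3 using 2
      norm_num
    have hEcs : Tendsto (fun n => Complex.normSq (v (a n)) + Complex.normSq (u (a n))
        - (Complex.normSq (u (a n)))^2/2
        - κ/2 * (2 * (v (a n) * (starRingEnd ℂ) (u (a n))).re)^2) atTop
        (nhds (Complex.normSq (v x) + Complex.normSq (u x) - (Complex.normSq (u x))^2/2
          - κ/2 * (2 * (v x * (starRingEnd ℂ) (u x)).re)^2)) := by
      have h3 : (fun n => Complex.normSq (v (a n)) + Complex.normSq (u (a n))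
          - (Complex.normSq (u (a n)))^2/2
          - κ/2 * (2 * (v (a n) * (starRingEnd ℂ) (u (a n))).re)^2)
          = fun _ => Complex.normSq (v x) + Complex.normSq (u x)
            - (Complex.normSq (u x))^2/2
            - κ/2 * (2 * (v x * (starRingEnd ℂ) (u x)).re)^2 :=
        funext fun n => hEc (a n) x
      rw [h3]
      exact tendsto_const_nhds
    have h0 := tendsto_nhds_unique hEcs hEn
    nlinarith [h0]
  -- the master pointwise identity
  have hP' : ∀ x, (2 * (v x * (starRingEnd ℂ) (u x)).re)^2 * (1 - 2*κ*Complex.normSq (u x))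
      = (1 - Complex.normSq (u x))^2 * (2*Complex.normSq (u x) - c^2) := by
    intro x
    have h1 : Complex.normSq (u x) * Complex.normSq (v x)
        = ((v x * (starRingEnd ℂ) (u x)).re)^2 + ((v x * (starRingEnd ℂ) (u x)).im)^2 := by
      have h3 := Complex.normSq_apply (v x * (starRingEnd ℂ) (u x))
      rw [Complex.normSq_mul, Complex.normSq_conj] at h3
      linear_combination h3
    have h2 : (v x * (starRingEnd ℂ) (u x)).im = ((starRingEnd ℂ) (u x) * v x).im := by
      rw [mul_comm]
    have h3 := h2.trans (hC x)
    have h4 := hD x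
    linear_combination (-4 : ℝ) * h1 + (4*Complex.normSq (u x)) * h4
      - (4*(v x * (starRingEnd ℂ) (u x)).im + 2*c*(Complex.normSq (u x) - 1)) * h3
  -- c bounds
  have hc0 : 0 < c := lt_of_lt_of_le (Real.sqrt_pos.mpr (by norm_num)) hc
  have hc2 : 2 ≤ c^2 := by
    nlinarith [Real.sq_sqrt (by norm_num : (0:ℝ) ≤ 2), Real.sqrt_nonneg 2]
  -- main dichotomy: modulus is identically 1
  have Hρ1 : ∀ x, Complex.normSq (u x) = 1 := by
    rcases eq_or_lt_of_le hc2 with hc2e | hc2l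
    · -- sonic case c² = 2
      have hg : ∀ x, 0 < 1 - 2*κ*Complex.normSq (u x) := by
        intro x
        rcases le_or_gt κ 0 with hκ0 | hκ0
        · nlinarith [Complex.normSq_nonneg (u x)]
        · by_contra hcg
          push_neg at hcg
          have hρbig : 1 < Complex.normSq (u x) := by nlinarith
          have h5 := hP' x
          rw [← hc2e] at h5
          nlinarith [sq_nonneg (2 * (v x * (starRingEnd ℂ) (u x)).re),
            mul_pos (mul_pos (sub_pos.mpr hρbig) (sub_pos.mpr hρbig)) (sub_pos.mpr hρbig),
            mul_nonneg (sq_nonneg (2 * (v x * (starRingEnd ℂ) (u x)).re)) (neg_nonneg.mpr hcg)]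
      have hηneg : ∀ x, 1 ≤ Complex.normSq (u x) := by
        intro x
        by_contra hcon
        push_neg at hcon
        have h5 := hP' x
        rw [← hc2e] at h5
        have hLHS : 0 ≤ (2 * (v x * (starRingEnd ℂ) (u x)).re)^2
            * (1 - 2*κ*Complex.normSq (u x)) := mul_nonneg (sq_nonneg _) (hg x).le
        have h6 : 0 < (1 - Complex.normSq (u x))^2 := pow_pos (sub_pos.mpr hcon) 2
        nlinarith
      have hbump := aux_bump (h := fun x => Complex.normSq (u x) - 1)
        (d := fun x => 2 * (v x * (starRingEnd ℂ) (u x)).re)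
        (by exact (Complex.continuous_normSq.comp hudiff.continuous).sub continuous_const)
        (fun x => (hρd x).sub_const 1)
        (by
          have h3 : (fun x => (Complex.normSq (u x) - 1)^2)
              = fun x => (1 - Complex.normSq (u x))^2 := funext fun x => by ring
          rw [h3]
          exact hη2')
        (by
          intro x hx hzero
          have h5 := hP' x
          have hzero' : 2 * (v x * (starRingEnd ℂ) (u x)).re = 0 := hzero
          rw [← hc2e, hzero'] at h5
          have h6 : 0 < Complex.normSq (u x) - 1 := hx
          have h7 : 0 < (1 - Complex.normSq (u x))^2 := by nlinarith
          have h8 : 0 < 2 * Complex.normSq (u x) - 2 := by linarith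
          nlinarith [mul_pos h7 h8])
      intro x
      have h5 : Complex.normSq (u x) - 1 ≤ 0 := hbump x
      have h6 := hηneg x
      linarith
    · -- supersonic case c² > 2
      set ε := min ((c^2 - 2)/4) ((1 - 2*κ)/(4*(|κ|+1))) with hεdef
      have hεpos : 0 < ε := by
        apply lt_min
        · linarith
        · apply div_pos (by linarith)
          positivity
      have key : ∀ x, |1 - Complex.normSq (u x)| ≤ ε → 1 - Complex.normSq (u x) = 0 := by
        intro x hx
        have hη1 : |1 - Complex.normSq (u x)| ≤ (c^2-2)/4 :=
          le_trans hx (min_le_left _ _)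
        have hηb2 : |1 - Complex.normSq (u x)| ≤ (1-2*κ)/(4*(|κ|+1)) :=
          le_trans hx (min_le_right _ _)
        have hb : |2*κ*(1 - Complex.normSq (u x))| = 2 * |κ| * |1 - Complex.normSq (u x)| := by
          rw [abs_mul, abs_mul, abs_two]
        have hsmall : 2 * |κ| * |1 - Complex.normSq (u x)| ≤ (1-2*κ)/2 := by
          have h7 : 2 * |κ| * ((1-2*κ)/(4*(|κ|+1))) ≤ (1-2*κ)/2 := by
            rw [show 2 * |κ| * ((1-2*κ)/(4*(|κ|+1)))
                = (2 * |κ| * (1-2*κ))/(4*(|κ|+1)) from by ring]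
            rw [div_le_div_iff₀ (by positivity) (by norm_num : (0:ℝ) < 2)]
            nlinarith [abs_nonneg κ, mul_nonneg (abs_nonneg κ)
              (le_of_lt (show (0:ℝ) < 1-2*κ by linarith))]
          have h8 := mul_le_mul_of_nonneg_left hηb2
            (by positivity : (0:ℝ) ≤ 2*|κ|)
          linarith
        have hgpos : 0 < 1 - 2*κ*Complex.normSq (u x) := by
          have h9 : 1 - 2*κ*Complex.normSq (u x)
              = (1 - 2*κ) + 2*κ*(1 - Complex.normSq (u x)) := by ring
          have h10 : -(2 * |κ| * |1 - Complex.normSq (u x)|) ≤ 2*κ*(1 - Complex.normSq (u x)) := by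
            rw [← hb]
            exact neg_abs_le _
          rw [h9]
          linarith
        have hΦneg : 2*Complex.normSq (u x) - c^2 < 0 := by
          have h11 := abs_le.mp hη1
          linarith [h11.1, h11.2]
        have h5 := hP' x
        by_contra hη0
        have hη2pos : 0 < (1 - Complex.normSq (u x))^2 := by
          rcases lt_or_gt_of_ne hη0 with h | h
          · nlinarith
          · nlinarith
        nlinarith [mul_nonneg (sq_nonneg (2 * (v x * (starRingEnd ℂ) (u x)).re)) hgpos.le,
          mul_neg_of_pos_of_neg hη2pos hΦneg]
      have hzero := aux_clopen (η := fun x => 1 - Complex.normSq (u x))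
        (by exact (continuous_const.sub (Complex.continuous_normSq.comp hudiff.continuous)))
        hη2' hεpos key
      intro x
      have h5 : 1 - Complex.normSq (u x) = 0 := hzero x
      linarith
  -- conclude: derivative vanishes and modulus is 1
  have hd1zero : ∀ x, 2 * (v x * (starRingEnd ℂ) (u x)).re = 0 := by
    intro x
    have h5 := hP' x
    rw [Hρ1 x] at h5
    have h6 : (2 * (v x * (starRingEnd ℂ) (u x)).re)^2 * (1 - 2*κ) = 0 := by
      linear_combination h5
    have h7 : (1 : ℝ) - 2*κ ≠ 0 := by linarith
    have h8 : (2 * (v x * (starRingEnd ℂ) (u x)).re)^2 = 0 :=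
      (mul_eq_zero.mp h6).resolve_right h7
    exact (pow_eq_zero_iff (by norm_num : (2:ℕ) ≠ 0)).mp h8
  have hvzero : ∀ x, deriv u x = 0 := by
    intro x
    have h5 := hD x
    rw [Hρ1 x, hd1zero x] at h5
    norm_num at h5
    rw [← hv]
    exact h5
  have huconst : ∀ x y, u x = u y := is_const_of_deriv_eq_zero hudiff hvzero
  refine ⟨Complex.arg (u 0), fun x => ?_⟩
  have h7 : u x = u 0 := huconst x 0
  have h8 : ‖u 0‖ = 1 := by
    have h9 := Hρ1 0
    rw [← Complex.sq_norm] at h9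
    nlinarith [norm_nonneg (u 0), sq_nonneg (‖u 0‖ - 1),
      sq_nonneg (‖u 0‖ + 1)]
  have h10 : u 0 = Complex.exp (Complex.I * (Complex.arg (u 0) : ℂ)) := by
    conv_lhs => rw [← Complex.norm_mul_exp_arg_mul_I (u 0)]
    rw [h8, Complex.ofReal_one, one_mul, mul_comm]
  rw [h7]
  exact h10
end
end

section
/- Let κ > 0. Then for every 𝔮 ∈ ℝ, the constrained infimum of the energy is −∞: inf{ E_κ(u) : u ∈ 𝒳(ℝ), inf_{x∈ℝ}|u(x)| > 0, P(u) = 𝔮 } = −∞. -/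
open MeasureTheory Real Filter Set

noncomputable section

/-- The energy `E_κ(u) = ∫ |u'|² + (1/2)∫ (1-|u|²)² - (κ/2)∫ ((|u|²)')²`. -/
def energy (κ : ℝ) (u : ℝ → ℂ) : ℝ :=
  (∫ x : ℝ, ‖deriv u x‖ ^ 2)
    + (1 / 2) * (∫ x : ℝ, (1 - ‖u x‖ ^ 2) ^ 2)
    - (κ / 2) * (∫ x : ℝ, (deriv (fun y : ℝ => ‖u y‖ ^ 2) x) ^ 2)

/-- The (renormalized) momentum `P(u) = -∫ Re(i u' conj u) (1 - 1/|u|²)`. -/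
def momentum (u : ℝ → ℂ) : ℝ :=
  -∫ x : ℝ, (Complex.I * deriv u x * (starRingEnd ℂ) (u x)).re
      * (1 - 1 / ‖u x‖ ^ 2)

namespace Stmt5Aux

def gg (b x : ℝ) : ℝ := Real.exp (-b * x ^ 2)
def ff (b A x : ℝ) : ℝ := 1 + A * gg b x
def fd (b A x : ℝ) : ℝ := A * (-(2 * b * x) * gg b x)
def Phi (b x : ℝ) : ℝ := ∫ s in (0:ℝ)..x, gg b s
def uu (b A t x : ℝ) : ℂ := (ff b A x : ℂ) * Complex.exp ((t * Phi b x : ℝ) * Complex.I)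
def ud (b A t x : ℝ) : ℂ :=
  ((fd b A x : ℂ) + (t * gg b x * ff b A x : ℝ) * Complex.I) *
    Complex.exp ((t * Phi b x : ℝ) * Complex.I)

variable {b A t x C : ℝ}

lemma gg_pos : 0 < gg b x := Real.exp_pos _

lemma gg_le_one (hb : 0 ≤ b) : gg b x ≤ 1 := by
  unfold gg
  rw [Real.exp_le_one_iff]
  have : 0 ≤ b * x ^ 2 := by positivity
  linarith

lemma continuous_gg : Continuous (gg b) := by
  unfold gg; fun_prop

lemma continuous_ff : Continuous (ff b A) := by
  unfold ff gg; fun_prop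

lemma continuous_fd : Continuous (fd b A) := by
  unfold fd gg; fun_prop

lemma hasDerivAt_gg : HasDerivAt (gg b) (-(2 * b * x) * gg b x) x := by
  have h1 : HasDerivAt (fun y : ℝ => -b * y ^ 2) (-b * (2 * x)) x := by
    simpa using (hasDerivAt_pow 2 x).const_mul (-b)
  have := h1.exp
  convert this using 1
  unfold gg; ring
  unfold gg; ring

lemma hasDerivAt_ff : HasDerivAt (ff b A) (fd b A x) x :=
  ((hasDerivAt_gg (b := b) (x := x)).const_mul A).const_add 1

lemma hasDerivAt_Phi : HasDerivAt (Phi b) (gg b x) x :=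
  intervalIntegral.integral_hasDerivAt_right
    (continuous_gg.intervalIntegrable _ _)
    (continuous_gg.stronglyMeasurableAtFilter _ _)
    continuous_gg.continuousAt

lemma continuous_Phi : Continuous (Phi b) := by
  have h : Differentiable ℝ (Phi b) := fun y => (hasDerivAt_Phi (b := b) (x := y)).differentiableAt
  exact h.continuous

lemma hasDerivAt_uu : HasDerivAt (uu b A t) (ud b A t x) x := by
  have hθ : HasDerivAt (fun y : ℝ => ((t * Phi b y : ℝ) : ℂ) * Complex.I)
      (((t * gg b x : ℝ) : ℂ) * Complex.I) x :=
    (((hasDerivAt_Phi (b := b) (x := x)).const_mul t).ofReal_comp).mul_const Complex.I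
  have hE := hθ.cexp
  have hf : HasDerivAt (fun y : ℝ => ((ff b A y : ℝ) : ℂ)) ((fd b A x : ℝ) : ℂ) x :=
    (hasDerivAt_ff (b := b) (A := A) (x := x)).ofReal_comp
  have := hf.mul hE
  refine this.congr_deriv ?_
  unfold ud
  push_cast
  ring

lemma deriv_uu : deriv (uu b A t) = ud b A t :=
  funext fun _ => (hasDerivAt_uu).deriv

lemma continuous_ud : Continuous (ud b A t) := by
  unfold ud
  have h1 : Continuous fun x => ((t * Phi b x : ℝ) : ℂ) * Complex.I :=
    ((Complex.continuous_ofReal.comp (continuous_const.mul continuous_Phi)).mul continuous_const)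
  exact ((Complex.continuous_ofReal.comp continuous_fd).add
    ((Complex.continuous_ofReal.comp
      ((continuous_const.mul continuous_gg).mul continuous_ff)).mul continuous_const)).mul
    (Complex.continuous_exp.comp h1)

lemma ff_ge_one (hA : 0 ≤ A) : 1 ≤ ff b A x := by
  have := (gg_pos (b := b) (x := x)).le
  unfold ff; nlinarith

lemma ff_le (hA : 1 ≤ A) (hb : 0 ≤ b) : ff b A x ≤ 2 * A := by
  have h1 := gg_le_one (b := b) (x := x) hb
  have h2 := (gg_pos (b := b) (x := x)).le
  unfold ff; nlinarith

lemma abs_uu (hA : 0 ≤ A) : ‖uu b A t x‖ = ff b A x := by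
  unfold uu
  rw [norm_mul, Complex.norm_exp_ofReal_mul_I, Complex.norm_real, Real.norm_eq_abs, mul_one,
    abs_of_pos (by linarith [ff_ge_one (b := b) (x := x) hA])]

lemma norm_ud_sq : ‖ud b A t x‖ ^ 2 = fd b A x ^ 2 + (t * gg b x * ff b A x) ^ 2 := by
  unfold ud
  rw [norm_mul, Complex.norm_exp_ofReal_mul_I, mul_one,
    ← Complex.normSq_eq_norm_sq, Complex.normSq_add_mul_I]

lemma mom_integrand (hA : 0 ≤ A) :
    (Complex.I * ud b A t x * (starRingEnd ℂ) (uu b A t x)).re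
      * (1 - 1 / ‖uu b A t x‖ ^ 2)
    = -(t * (gg b x * (ff b A x ^ 2 - 1))) := by
  have hf1 : 1 ≤ ff b A x := ff_ge_one hA
  have hf0 : ff b A x ≠ 0 := by linarith
  have hconj : (starRingEnd ℂ) (uu b A t x)
      = (ff b A x : ℂ) * Complex.exp (-(((t * Phi b x : ℝ)) * Complex.I)) := by
    unfold uu
    rw [map_mul, Complex.conj_ofReal, ← Complex.exp_conj]
    congr 1
    rw [map_mul, Complex.conj_ofReal, Complex.conj_I]
    ring
  have hE : Complex.exp (((t * Phi b x : ℝ)) * Complex.I)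
      * Complex.exp (-(((t * Phi b x : ℝ)) * Complex.I)) = 1 := by
    rw [← Complex.exp_add, add_neg_cancel, Complex.exp_zero]
  have hprod : Complex.I * ud b A t x * (starRingEnd ℂ) (uu b A t x)
      = Complex.I * ((fd b A x : ℂ) + (t * gg b x * ff b A x : ℝ) * Complex.I)
        * (ff b A x : ℂ) := by
    rw [hconj]; unfold ud
    calc Complex.I * (((fd b A x : ℂ) + (t * gg b x * ff b A x : ℝ) * Complex.I) *
          Complex.exp (((t * Phi b x : ℝ)) * Complex.I)) *
          ((ff b A x : ℂ) * Complex.exp (-(((t * Phi b x : ℝ)) * Complex.I)))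
        = Complex.I * ((fd b A x : ℂ) + (t * gg b x * ff b A x : ℝ) * Complex.I)
            * (ff b A x : ℂ) *
          (Complex.exp (((t * Phi b x : ℝ)) * Complex.I) *
            Complex.exp (-(((t * Phi b x : ℝ)) * Complex.I))) := by ring
      _ = _ := by rw [hE, mul_one]
  rw [hprod, abs_uu hA]
  have hre : (Complex.I * ((fd b A x : ℂ) + (t * gg b x * ff b A x : ℝ) * Complex.I)
      * (ff b A x : ℂ)).re = -(t * gg b x * ff b A x) * ff b A x := by
    simp [Complex.mul_re, Complex.mul_im]
  rw [hre]
  field_simp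

lemma sq_abs_fun (hA : 0 ≤ A) :
    (fun y : ℝ => ‖uu b A t y‖ ^ 2) = fun y => ff b A y ^ 2 :=
  funext fun y => by rw [abs_uu hA]

lemma deriv_sq_ff : deriv (fun y => ff b A y ^ 2) x = 2 * ff b A x * fd b A x := by
  have := ((hasDerivAt_ff (b := b) (A := A) (x := x)).pow 2).deriv
  rw [show (fun y => ff b A y ^ 2) = ff b A ^ 2 from rfl, this]; ring

lemma integrable_gg (hb : 0 < b) : Integrable (gg b) := by
  unfold gg; exact integrable_exp_neg_mul_sq hb

lemma integrable_of_le_gauss (hb : 0 < b) {h : ℝ → ℝ} (hc : Continuous h)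
    (hle : ∀ x, |h x| ≤ C * gg b x) : Integrable h := by
  refine ((integrable_gg hb).const_mul C).mono' hc.aestronglyMeasurable ?_
  exact Eventually.of_forall fun x => by simpa [Real.norm_eq_abs] using hle x

lemma integral_le_of_le_gauss (hb : 0 < b) {h : ℝ → ℝ} (hint : Integrable h)
    (hle : ∀ x, h x ≤ C * gg b x) : ∫ x, h x ≤ C * Real.sqrt (π / b) := by
  have h1 : ∫ x, h x ≤ ∫ x, C * gg b x :=
    integral_mono hint ((integrable_gg hb).const_mul C) hle
  have h2 : ∫ x, C * gg b x = C * Real.sqrt (π / b) := by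
    rw [integral_const_mul]
    unfold gg
    rw [integral_gaussian]
  linarith

lemma mul_exp_neg_le_one {y : ℝ} : 0 ≤ y → y * Real.exp (-y) ≤ 1 := by
  intro _
  have h1 := Real.add_one_le_exp y
  have h2 : Real.exp (-y) * Real.exp y = 1 := by
    rw [← Real.exp_add]; simp
  have h3 := (Real.exp_pos (-y)).le
  nlinarith

lemma sq_mul_gg_le (hb : 0 < b) : x ^ 2 * gg b x ≤ 1 / b := by
  have h := mul_exp_neg_le_one (y := b * x ^ 2) (by positivity)
  have hg : gg b x = Real.exp (-(b * x ^ 2)) := by unfold gg; ring_nf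
  rw [hg, div_eq_inv_mul, ← mul_le_mul_iff_right₀ hb]
  calc b * (x ^ 2 * Real.exp (-(b * x ^ 2))) = b * x ^ 2 * Real.exp (-(b * x ^ 2)) := by ring
    _ ≤ 1 := h
    _ = b * (b⁻¹ * 1) := by field_simp


lemma fd_sq_le (hb : 0 < b) : fd b A x ^ 2 ≤ 4 * A ^ 2 * b * gg b x := by
  have h := mul_le_mul_of_nonneg_left (sq_mul_gg_le (b := b) (x := x) hb)
    (mul_nonneg (show (0:ℝ) ≤ 4 * A ^ 2 * b ^ 2 by positivity)
      (gg_pos (b := b) (x := x)).le)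
  have hb' : 4 * A ^ 2 * b ^ 2 * gg b x * (1 / b) = 4 * A ^ 2 * b * gg b x := by
    field_simp
  unfold fd
  nlinarith [h, hb']

lemma ff_sq_le (hb : 0 < b) (hA : 1 ≤ A) : ff b A x ^ 2 ≤ 4 * A ^ 2 := by
  have hf1 : 1 ≤ ff b A x := ff_ge_one (by linarith)
  have hf2 : ff b A x ≤ 2 * A := ff_le hA hb.le
  nlinarith

lemma phase_sq_le (hb : 1 ≤ b) (hA : 1 ≤ A) {Q : ℝ}
    (ht2 : t ^ 2 ≤ Q * b / (4 * A ^ 2)) (hQ : 0 ≤ Q) :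
    (t * gg b x * ff b A x) ^ 2 ≤ Q * b * gg b x := by
  have hb0 : (0:ℝ) < b := by linarith
  have hg1 := gg_le_one (b := b) (x := x) hb0.le
  have hg0 := (gg_pos (b := b) (x := x)).le
  have hf4 : ff b A x ^ 2 ≤ 4 * A ^ 2 := ff_sq_le hb0 hA
  have hA0 : (0:ℝ) < A := by linarith
  have key : t ^ 2 * (4 * A ^ 2) ≤ Q * b := by
    have h := mul_le_mul_of_nonneg_right ht2 (show (0:ℝ) ≤ 4 * A ^ 2 by positivity)
    calc t ^ 2 * (4 * A ^ 2) ≤ Q * b / (4 * A ^ 2) * (4 * A ^ 2) := h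
      _ = Q * b := by field_simp
  have hgg : gg b x ^ 2 ≤ gg b x := by nlinarith
  calc (t * gg b x * ff b A x) ^ 2 = t ^ 2 * ff b A x ^ 2 * gg b x ^ 2 := by ring
    _ ≤ t ^ 2 * (4 * A ^ 2) * gg b x ^ 2 := by
        nlinarith [mul_le_mul_of_nonneg_right
          (mul_le_mul_of_nonneg_left hf4 (sq_nonneg t)) (sq_nonneg (gg b x))]
    _ ≤ Q * b * gg b x ^ 2 := by
        nlinarith [mul_le_mul_of_nonneg_right key (sq_nonneg (gg b x))]
    _ ≤ Q * b * gg b x := by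
        nlinarith [mul_le_mul_of_nonneg_left hgg
          (show (0:ℝ) ≤ Q * b by positivity)]

lemma pot_le (hb : 0 < b) (hA : 1 ≤ A) :
    (1 - ff b A x ^ 2) ^ 2 ≤ 9 * A ^ 4 * gg b x := by
  have hg1 := gg_le_one (b := b) (x := x) hb.le
  have hg0 := (gg_pos (b := b) (x := x)).le
  have h1 : (1 - ff b A x ^ 2) ^ 2 = (2 * A * gg b x + A ^ 2 * gg b x ^ 2) ^ 2 := by
    unfold ff; ring
  rw [h1]
  have hsmall : 2 * A + A ^ 2 * gg b x ≤ 3 * A ^ 2 := by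
    nlinarith [mul_le_mul_of_nonneg_left hg1 (sq_nonneg A)]
  have h2 : 2 * A * gg b x + A ^ 2 * gg b x ^ 2 ≤ 3 * A ^ 2 * gg b x := by
    nlinarith [mul_le_mul_of_nonneg_right hsmall hg0]
  have h3 : 0 ≤ 2 * A * gg b x + A ^ 2 * gg b x ^ 2 := by positivity
  have h4 : (2 * A * gg b x + A ^ 2 * gg b x ^ 2) ^ 2 ≤ (3 * A ^ 2 * gg b x) ^ 2 := by
    nlinarith [mul_self_le_mul_self h3 h2]
  have hgg : gg b x ^ 2 ≤ gg b x := by nlinarith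
  nlinarith [mul_le_mul_of_nonneg_left hgg (show (0:ℝ) ≤ 9 * A ^ 4 by positivity)]

lemma neg_term_le (hb : 0 < b) (hA : 1 ≤ A) :
    (2 * ff b A x * fd b A x) ^ 2 ≤ 64 * A ^ 4 * b * gg b x := by
  have hf4 : ff b A x ^ 2 ≤ 4 * A ^ 2 := ff_sq_le hb hA
  have h1 := fd_sq_le (b := b) (A := A) (x := x) hb
  have hgbg : (0:ℝ) ≤ 4 * A ^ 2 * b * gg b x :=
    mul_nonneg (by positivity) (gg_pos (b := b) (x := x)).le
  have h2 : (2 * ff b A x * fd b A x) ^ 2 = 4 * ff b A x ^ 2 * fd b A x ^ 2 := by ring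
  rw [h2]
  calc 4 * ff b A x ^ 2 * fd b A x ^ 2 ≤ 4 * ff b A x ^ 2 * (4 * A ^ 2 * b * gg b x) := by
        nlinarith [mul_le_mul_of_nonneg_left h1
          (show (0:ℝ) ≤ 4 * ff b A x ^ 2 by positivity)]
    _ ≤ 64 * A ^ 4 * b * gg b x := by
        nlinarith [mul_le_mul_of_nonneg_right
          (show 4 * ff b A x ^ 2 ≤ 16 * A ^ 2 by nlinarith) hgbg]

lemma J_integrand_le (hb : 0 < b) (hA : 1 ≤ A) :
    gg b x * (ff b A x ^ 2 - 1) ≤ 3 * A ^ 2 * gg b x := by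
  have hg1 := gg_le_one (b := b) (x := x) hb.le
  have hg0 := (gg_pos (b := b) (x := x)).le
  have h1 : ff b A x ^ 2 - 1 = 2 * A * gg b x + A ^ 2 * gg b x ^ 2 := by unfold ff; ring
  rw [h1]
  have hsmall : 2 * A * gg b x + A ^ 2 * gg b x ^ 2 ≤ 3 * A ^ 2 := by
    nlinarith [mul_le_mul_of_nonneg_left hg1 (sq_nonneg A),
      mul_self_le_mul_self hg0 hg1]
  nlinarith [mul_le_mul_of_nonneg_right hsmall hg0]

lemma J_integrand_nonneg (hA : 0 ≤ A) : 0 ≤ gg b x * (ff b A x ^ 2 - 1) := by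
  have hf1 : 1 ≤ ff b A x := ff_ge_one hA
  have hg0 := (gg_pos (b := b) (x := x)).le
  nlinarith [sq_nonneg (ff b A x - 1)]


lemma J_low_pt {s : ℝ} (hA : 1 ≤ A) (hs : 1 ≤ s) :
    ∀ x ∈ Icc (0:ℝ) (1/s),
      2 * A * Real.exp (-2) ≤ gg (s ^ 2) x * (ff (s ^ 2) A x ^ 2 - 1) := by
  intro x hx
  obtain ⟨hx0, hx1⟩ := hx
  have hs0 : (0:ℝ) < s := by linarith
  have hbx : s ^ 2 * x ^ 2 ≤ 1 := by
    have h1 : x * x ≤ (1/s) * (1/s) := mul_self_le_mul_self hx0 hx1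
    have h2 : (1/s) * (1/s) = 1 / s ^ 2 := by rw [pow_two]; field_simp
    have h3 : x ^ 2 ≤ 1 / s ^ 2 := by rw [pow_two]; rw [h2] at h1; exact h1
    calc s ^ 2 * x ^ 2 ≤ s ^ 2 * (1 / s ^ 2) := by
          exact mul_le_mul_of_nonneg_left h3 (by positivity)
      _ = 1 := by field_simp
  have hg : Real.exp (-1) ≤ gg (s ^ 2) x := by
    unfold gg; exact Real.exp_le_exp.mpr (by nlinarith)
  have hg0 : (0:ℝ) ≤ gg (s ^ 2) x := (gg_pos).le
  have he : Real.exp (-1) * Real.exp (-1) = Real.exp (-2) := by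
    rw [← Real.exp_add]; norm_num
  have h1 : ff (s ^ 2) A x ^ 2 - 1
      = 2 * A * gg (s ^ 2) x + A ^ 2 * gg (s ^ 2) x ^ 2 := by unfold ff; ring
  rw [h1]
  have hgg2 : Real.exp (-2) ≤ gg (s ^ 2) x ^ 2 := by
    rw [← he, pow_two]; exact mul_self_le_mul_self (Real.exp_pos (-1)).le hg
  have hA0 : (0:ℝ) ≤ A := by linarith
  nlinarith [mul_nonneg (mul_nonneg (mul_nonneg hA0 hA0) hg0) (mul_self_nonneg (gg (s^2) x)),
    mul_le_mul_of_nonneg_left hgg2 (show (0:ℝ) ≤ 2 * A by linarith),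
    mul_le_mul_of_nonneg_left hgg2 (mul_nonneg (show (0:ℝ) ≤ 2*A by linarith) hg0)]

lemma neg_low_pt {s : ℝ} (hA : 1 ≤ A) (hs : 1 ≤ s) :
    ∀ x ∈ Icc (1/s) (2/s),
      16 * A ^ 4 * Real.exp (-16) * s ^ 2 ≤ (2 * ff (s ^ 2) A x * fd (s ^ 2) A x) ^ 2 := by
  intro x hx
  obtain ⟨hx1, hx2⟩ := hx
  have hs0 : (0:ℝ) < s := by linarith
  have hx0 : (0:ℝ) ≤ x := le_trans (by positivity) hx1
  have hA0 : (0:ℝ) < A := by linarith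
  have hsx : 1 ≤ s ^ 2 * x ^ 2 := by
    have h1 : (1/s) * (1/s) ≤ x * x := mul_self_le_mul_self (by positivity) hx1
    have h2 : (1/s) * (1/s) = 1 / s ^ 2 := by rw [pow_two]; field_simp
    rw [h2] at h1
    calc (1:ℝ) = s ^ 2 * (1 / s ^ 2) := by field_simp
      _ ≤ s ^ 2 * (x * x) := mul_le_mul_of_nonneg_left h1 (by positivity)
      _ = s ^ 2 * x ^ 2 := by ring
  have hbx : s ^ 2 * x ^ 2 ≤ 4 := by
    have h1 : x * x ≤ (2/s) * (2/s) := mul_self_le_mul_self hx0 hx2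
    have h2 : (2/s) * (2/s) = 4 / s ^ 2 := by field_simp; ring
    rw [h2] at h1
    calc s ^ 2 * x ^ 2 = s ^ 2 * (x * x) := by ring
      _ ≤ s ^ 2 * (4 / s ^ 2) := mul_le_mul_of_nonneg_left h1 (by positivity)
      _ = 4 := by field_simp
  have hg4 : Real.exp (-4) ≤ gg (s ^ 2) x := by
    unfold gg ; exact Real.exp_le_exp.mpr (by nlinarith)
  have hg0 : (0:ℝ) ≤ gg (s ^ 2) x := (gg_pos).le
  have hf : A * Real.exp (-4) ≤ ff (s ^ 2) A x := by
    have := mul_le_mul_of_nonneg_left hg4 hA0.le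
    unfold ff; nlinarith
  have hgg : Real.exp (-4) * Real.exp (-4) ≤ gg (s ^ 2) x * gg (s ^ 2) x :=
    mul_self_le_mul_self (Real.exp_pos (-4)).le hg4
  have hff : (A * Real.exp (-4)) * (A * Real.exp (-4)) ≤ ff (s ^ 2) A x * ff (s ^ 2) A x :=
    mul_self_le_mul_self (by positivity) hf
  -- chain the three lower bounds
  have c1 : 1 * (Real.exp (-4) * Real.exp (-4)) ≤ (s ^ 2 * x ^ 2) * (gg (s ^ 2) x * gg (s ^ 2) x) :=
    mul_le_mul hsx hgg (by positivity) (by nlinarith)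
  have c2 : (1 * (Real.exp (-4) * Real.exp (-4))) * ((A * Real.exp (-4)) * (A * Real.exp (-4)))
      ≤ ((s ^ 2 * x ^ 2) * (gg (s ^ 2) x * gg (s ^ 2) x)) * (ff (s ^ 2) A x * ff (s ^ 2) A x) :=
    mul_le_mul c1 hff (by positivity) (by nlinarith [mul_nonneg (mul_nonneg hs0.le hs0.le) (mul_self_nonneg x), mul_self_nonneg (gg (s^2) x)])
  have hE : (1 * (Real.exp (-4) * Real.exp (-4))) * ((A * Real.exp (-4)) * (A * Real.exp (-4)))
      = A ^ 2 * Real.exp (-16) := by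
    rw [show (-16 : ℝ) = (-4) + ((-4) + ((-4) + (-4))) by norm_num,
      Real.exp_add, Real.exp_add, Real.exp_add]
    ring
  have hrhs : (2 * ff (s ^ 2) A x * fd (s ^ 2) A x) ^ 2
      = (16 * A ^ 2 * s ^ 2) * (((s ^ 2 * x ^ 2) * (gg (s ^ 2) x * gg (s ^ 2) x))
          * (ff (s ^ 2) A x * ff (s ^ 2) A x)) := by
    unfold fd; ring
  rw [hrhs]
  rw [hE] at c2
  nlinarith [mul_le_mul_of_nonneg_left c2 (show (0:ℝ) ≤ 16 * A ^ 2 * s ^ 2 by positivity)]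

lemma integral_ge_Icc {h : ℝ → ℝ} (hint : Integrable h) (hpos : ∀ x, 0 ≤ h x)
    {a c d : ℝ} (hac : a ≤ c) (hpt : ∀ x ∈ Icc a c, d ≤ h x) :
    d * (c - a) ≤ ∫ x, h x := by
  have h1 : d * (c - a) ≤ ∫ x in Icc a c, h x := by
    have h0 := setIntegral_ge_of_const_le (measurableSet_Icc)
      (by rw [Real.volume_Icc]; exact ENNReal.ofReal_ne_top) hpt hint.integrableOn
    rwa [Real.volume_real_Icc_of_le hac, smul_eq_mul, mul_comm] at h0
  have h2 : ∫ x in Icc a c, h x ≤ ∫ x, h x :=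
    setIntegral_le_integral hint (ae_of_all _ hpos)
  linarith

end Stmt5Aux

open Stmt5Aux in
theorem stmt5 (κ : ℝ) (hκ : 0 < κ) (q : ℝ) :
    ∀ M : ℝ, ∃ u : ℝ → ℂ,
      Differentiable ℝ u ∧ inX u ∧
      (∃ m : ℝ, 0 < m ∧ ∀ x : ℝ, m ≤ ‖u x‖) ∧
      Integrable (fun x : ℝ => ‖deriv u x‖ ^ 2) volume ∧
      Integrable (fun x : ℝ => (1 - ‖u x‖ ^ 2) ^ 2) volume ∧
      Integrable (fun x : ℝ => (deriv (fun y : ℝ => ‖u y‖ ^ 2) x) ^ 2) volume ∧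
      momentum u = q ∧ energy κ u < M := by
  intro M
  -- the amplitude A
  set R : ℝ := (Real.sqrt π * (4 + q ^ 2 * Real.exp 4) + 1) * Real.exp 16 / (8 * κ) with hRdef
  have hR0 : 0 ≤ R := by positivity
  set A : ℝ := max 1 (Real.sqrt R) with hAdef
  have hA1 : (1:ℝ) ≤ A := le_max_left _ _
  have hA0 : (0:ℝ) < A := lt_of_lt_of_le one_pos hA1
  have hA2 : R ≤ A ^ 2 := by
    have h := le_max_right 1 (Real.sqrt R)
    have h2 := Real.mul_self_sqrt hR0
    nlinarith [mul_self_le_mul_self (Real.sqrt_nonneg R) h]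
  set Q : ℝ := q ^ 2 * Real.exp 4 with hQdef
  have hQ0 : 0 ≤ Q := by positivity
  have hcond : (4 * A ^ 2 + Q) * Real.sqrt π + 1 ≤ 8 * κ * Real.exp (-16) * A ^ 4 := by
    have hee : Real.exp (-16) * Real.exp 16 = 1 := by rw [← Real.exp_add]; norm_num
    have hc0 : (0:ℝ) < 8 * κ * Real.exp (-16) := by positivity
    have h1 : 8 * κ * Real.exp (-16) * R = Real.sqrt π * (4 + Q) + 1 := by
      rw [hRdef, hQdef]
      field_simp
      linear_combination hee
    have h2 := mul_le_mul_of_nonneg_right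
      (mul_le_mul_of_nonneg_left hA2 hc0.le) (sq_nonneg A)
    have h3 : (1:ℝ) ≤ A ^ 2 := by nlinarith
    have h4 := mul_le_mul_of_nonneg_left h3
      (show (0:ℝ) ≤ Real.sqrt π * Q + 1 by positivity)
    nlinarith [Real.sqrt_nonneg π]
  -- the scale s, b = s²
  set s : ℝ := max 1 (9/2 * A ^ 4 * Real.sqrt π - M + 1) with hsdef
  have hs1 : (1:ℝ) ≤ s := le_max_left _ _
  have hs0 : (0:ℝ) < s := lt_of_lt_of_le one_pos hs1
  have hsM : 9/2 * A ^ 4 * Real.sqrt π - M + 1 ≤ s := le_max_right _ _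
  set b : ℝ := s ^ 2 with hbdef
  have hb0 : (0:ℝ) < b := by positivity
  have hb1 : (1:ℝ) ≤ b := by nlinarith
  -- the momentum normalization
  set Jf : ℝ → ℝ := fun x => gg b x * (ff b A x ^ 2 - 1) with hJfdef
  have hJcont : Continuous Jf :=
    continuous_gg.mul ((continuous_ff.pow 2).sub continuous_const)
  have hJint : Integrable Jf :=
    integrable_of_le_gauss hb0 hJcont (C := 3 * A ^ 2) (fun x => by
      rw [abs_of_nonneg (J_integrand_nonneg hA0.le)]
      exact J_integrand_le hb0 hA1)
  set J : ℝ := ∫ x, Jf x with hJdef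
  have hJlow : 2 * A * Real.exp (-2) * (1/s) ≤ J := by
    have h := integral_ge_Icc hJint (fun x => J_integrand_nonneg hA0.le)
      (show (0:ℝ) ≤ 1/s by positivity) (fun x hx => J_low_pt hA1 hs1 x hx)
    simpa using h
  have hL0 : (0:ℝ) < 2 * A * Real.exp (-2) * (1/s) := by positivity
  have hJ0 : (0:ℝ) < J := lt_of_lt_of_le hL0 hJlow
  set t : ℝ := q / J with htdef
  have ht2 : t ^ 2 ≤ Q * b / (4 * A ^ 2) := by
    have h1 : t ^ 2 = q ^ 2 / J ^ 2 := by rw [htdef, div_pow]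
    have h2 : (2 * A * Real.exp (-2) * (1/s)) ^ 2 ≤ J ^ 2 :=
      pow_le_pow_left₀ hL0.le hJlow 2
    have h3 : q ^ 2 / J ^ 2 ≤ q ^ 2 / (2 * A * Real.exp (-2) * (1/s)) ^ 2 :=
      div_le_div_of_nonneg_left (sq_nonneg q) (by positivity) h2
    have he : Real.exp (-2) * Real.exp (-2) * Real.exp 4 = 1 := by
      rw [← Real.exp_add, ← Real.exp_add]; norm_num
    have h4 : q ^ 2 / (2 * A * Real.exp (-2) * (1/s)) ^ 2 = Q * b / (4 * A ^ 2) := by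
      rw [hQdef, hbdef]
      rw [div_eq_div_iff (by positivity) (by positivity)]
      field_simp
      linear_combination (-4 * q ^ 2) * he
    linarith [h1 ▸ h3, h4 ▸ h3]
  -- derivative identities
  have hd_uu : deriv (uu b A t) = ud b A t := deriv_uu
  have he1 : (fun x : ℝ => ‖deriv (uu b A t) x‖ ^ 2)
      = fun x => fd b A x ^ 2 + (t * gg b x * ff b A x) ^ 2 := by
    funext x; rw [hd_uu]; exact norm_ud_sq
  have he2 : (fun x : ℝ => (1 - ‖uu b A t x‖ ^ 2) ^ 2)
      = fun x => (1 - ff b A x ^ 2) ^ 2 := by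
    funext x; rw [abs_uu hA0.le]
  have he3 : (fun x : ℝ => (deriv (fun y : ℝ => ‖uu b A t y‖ ^ 2) x) ^ 2)
      = fun x => (2 * ff b A x * fd b A x) ^ 2 := by
    funext x; rw [sq_abs_fun hA0.le, deriv_sq_ff]
  -- integrability
  have hI1pt : ∀ x, fd b A x ^ 2 + (t * gg b x * ff b A x) ^ 2
      ≤ ((4 * A ^ 2 + Q) * b) * gg b x := by
    intro x
    have h1 := fd_sq_le (b := b) (A := A) (x := x) hb0
    have h2 := phase_sq_le (b := b) (A := A) (t := t) (x := x) hb1 hA1 ht2 hQ0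
    nlinarith
  have hI1cont : Continuous fun x : ℝ => fd b A x ^ 2 + (t * gg b x * ff b A x) ^ 2 :=
    (continuous_fd.pow 2).add (((continuous_const.mul continuous_gg).mul continuous_ff).pow 2)
  have hI1int : Integrable fun x : ℝ => fd b A x ^ 2 + (t * gg b x * ff b A x) ^ 2 :=
    integrable_of_le_gauss hb0 hI1cont (fun x => by
      rw [abs_of_nonneg (by positivity)]; exact hI1pt x)
  have hI2cont : Continuous fun x : ℝ => (1 - ff b A x ^ 2) ^ 2 :=
    (continuous_const.sub (continuous_ff.pow 2)).pow 2
  have hI2int : Integrable fun x : ℝ => (1 - ff b A x ^ 2) ^ 2 :=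
    integrable_of_le_gauss hb0 hI2cont (fun x => by
      rw [abs_of_nonneg (by positivity)]; exact pot_le hb0 hA1)
  have hI3cont : Continuous fun x : ℝ => (2 * ff b A x * fd b A x) ^ 2 :=
    ((continuous_const.mul continuous_ff).mul continuous_fd).pow 2
  have hI3int : Integrable fun x : ℝ => (2 * ff b A x * fd b A x) ^ 2 :=
    integrable_of_le_gauss hb0 hI3cont (fun x => by
      rw [abs_of_nonneg (by positivity)]; exact neg_term_le hb0 hA1)
  -- the map u
  refine ⟨uu b A t, fun x => (hasDerivAt_uu).differentiableAt, ?_,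
    ⟨1, one_pos, fun x => by rw [abs_uu hA0.le]; exact ff_ge_one hA0.le⟩,
    ?_, ?_, ?_, ?_, ?_⟩
  · constructor
    · rw [hd_uu]
      refine (memLp_two_iff_integrable_sq_norm continuous_ud.aestronglyMeasurable).mpr ?_
      have hfn : (fun x : ℝ => ‖ud b A t x‖ ^ 2)
          = fun x => fd b A x ^ 2 + (t * gg b x * ff b A x) ^ 2 :=
        funext fun x => norm_ud_sq
      rw [hfn]; exact hI1int
    · have hfn : (fun x : ℝ => 1 - ‖uu b A t x‖ ^ 2)
          = fun x => 1 - ff b A x ^ 2 :=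
        funext fun x => by rw [abs_uu hA0.le]
      rw [hfn]
      exact (memLp_two_iff_integrable_sq
        (continuous_const.sub (continuous_ff.pow 2)).aestronglyMeasurable).mpr hI2int
  · rw [he1]; exact hI1int
  · rw [he2]; exact hI2int
  · rw [he3]; exact hI3int
  · -- momentum
    unfold momentum
    have hfn : (fun x : ℝ => (Complex.I * deriv (uu b A t) x
          * (starRingEnd ℂ) (uu b A t x)).re
        * (1 - 1 / ‖uu b A t x‖ ^ 2)) = fun x => -(t * Jf x) := by
      funext x
      rw [hd_uu]
      exact mom_integrand hA0.le
    rw [hfn, integral_neg, neg_neg, integral_const_mul]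
    rw [htdef]
    exact div_mul_cancel₀ q hJ0.ne'
  · -- energy
    unfold energy
    rw [he1, he2, he3]
    have hsqrtb : Real.sqrt b = s := by rw [hbdef]; exact Real.sqrt_sq hs0.le
    have hsqrt : Real.sqrt (π / b) = Real.sqrt π / s := by
      rw [Real.sqrt_div Real.pi_pos.le, hsqrtb]
    have hB1 : ∫ x, (fd b A x ^ 2 + (t * gg b x * ff b A x) ^ 2)
        ≤ ((4 * A ^ 2 + Q) * b) * (Real.sqrt π / s) := by
      rw [← hsqrt]; exact integral_le_of_le_gauss hb0 hI1int hI1pt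
    have hB1' : ∫ x, (fd b A x ^ 2 + (t * gg b x * ff b A x) ^ 2)
        ≤ (4 * A ^ 2 + Q) * Real.sqrt π * s := by
      have heq : ((4 * A ^ 2 + Q) * b) * (Real.sqrt π / s)
          = (4 * A ^ 2 + Q) * Real.sqrt π * s := by
        rw [hbdef]; field_simp
      linarith [heq ▸ hB1]
    have hB2 : ∫ x, (1 - ff b A x ^ 2) ^ 2 ≤ 9 * A ^ 4 * (Real.sqrt π / s) := by
      rw [← hsqrt]
      exact integral_le_of_le_gauss hb0 hI2int (fun x => pot_le hb0 hA1)
    have hB2' : ∫ x, (1 - ff b A x ^ 2) ^ 2 ≤ 9 * A ^ 4 * Real.sqrt π := by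
      have h1 : Real.sqrt π / s ≤ Real.sqrt π := div_le_self (Real.sqrt_nonneg π) hs1
      have h2 := mul_le_mul_of_nonneg_left h1 (show (0:ℝ) ≤ 9 * A ^ 4 by positivity)
      linarith
    have hB3 : 16 * A ^ 4 * Real.exp (-16) * b * (2/s - 1/s)
        ≤ ∫ x, (2 * ff b A x * fd b A x) ^ 2 := by
      refine integral_ge_Icc hI3int (fun x => sq_nonneg _)
        ((div_le_div_iff_of_pos_right hs0).mpr one_le_two) (fun x hx => neg_low_pt hA1 hs1 x hx)
    have hB3' : 16 * A ^ 4 * Real.exp (-16) * s ≤ ∫ x, (2 * ff b A x * fd b A x) ^ 2 := by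
      have heq : 16 * A ^ 4 * Real.exp (-16) * b * (2/s - 1/s)
          = 16 * A ^ 4 * Real.exp (-16) * s := by
        rw [hbdef]; field_simp; ring
      linarith [heq ▸ hB3]
    have hI3ge : κ / 2 * (16 * A ^ 4 * Real.exp (-16) * s)
        ≤ κ / 2 * ∫ x, (2 * ff b A x * fd b A x) ^ 2 :=
      mul_le_mul_of_nonneg_left hB3' (by positivity)
    have hcs := mul_le_mul_of_nonneg_right hcond hs0.le
    linarith [hB1', hB2', hI3ge, hcs, hsM]
end
end
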